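/- Let 𝒩 be a connected plane Euclidean network and let p, q ∈ 𝒩_ℓ be diametral points (d(p,q) = diam(𝒩_ℓ)) with p lying on a non-pendant edge uv and q lying on a different non-pendant edge u'v'. Then d(p,q) = ‖p−u‖ + d(u,q) = ‖p−v‖ + d(v,q) = ‖q−u'‖ + d(u',p) = ‖q−v'‖ + d(v',p); moreover, either (d(p,q) = ‖p−u‖ + d(u,u') + ‖u'−q‖ and d(p,q) = ‖p−v‖ + d(v,v') + ‖v'−q‖), or (d(p,q) = ‖p−u‖ + d(u,v') + ‖v'−q‖ and d(p,q) = ‖p−v‖ + d(v,u') + ‖u'−q‖). (That is, there exist two shortest p–q paths P₁ and P₂ such that either u,u' ∈ P₁ and v,v' ∈ P₂, or u,v' ∈ P₁ and v,u' ∈ P₂.) -/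

import Mathlib

open Set
open scoped ENNReal

noncomputable section

attribute [local instance] Classical.propDecidable

/-- Points of the Euclidean plane. -/
abbrev Pt : Type := EuclideanSpace ℝ (Fin 2)

/-- Intrinsic (geodesic) distance inside a set `X ⊆ ℝ²`: the infimum of the lengths
(total variations) of continuous paths from `p` to `q` whose image lies in `X`. -/
def idist (X : Set Pt) (p q : Pt) : ℝ≥0∞ :=
  ⨅ (γ : ℝ → Pt) (_ : ContinuousOn γ (Set.Icc 0 1)) (_ : γ '' Set.Icc 0 1 ⊆ X)
    (_ : γ 0 = p) (_ : γ 1 = q), eVariationOn γ (Set.Icc 0 1)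

/-- Eccentricity of a point within `X`. -/
def ecc (X : Set Pt) (p : Pt) : ℝ≥0∞ := ⨆ q ∈ X, idist X p q

/-- Intrinsic diameter of `X`. -/
def idiam (X : Set Pt) : ℝ≥0∞ := ⨆ p ∈ X, ecc X p

/-- A plane Euclidean network: a finite set of vertices in the plane together with a
finite set of straight-line edges (recorded as ordered pairs of distinct vertices, each
edge recorded exactly once), such that two distinct edges meet only in common endpoints. -/
structure PlaneNetwork where
  V : Finset Pt
  Edg : Finset (Pt × Pt)
  ends_mem : ∀ e ∈ Edg, e.1 ∈ V ∧ e.2 ∈ V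
  ends_ne : ∀ e ∈ Edg, e.1 ≠ e.2
  no_swap : ∀ e ∈ Edg, (e.2, e.1) ∉ Edg
  vertex_cover : ∀ v ∈ V, ∃ e ∈ Edg, v = e.1 ∨ v = e.2
  plane : ∀ e ∈ Edg, ∀ f ∈ Edg, e ≠ f →
    segment ℝ e.1 e.2 ∩ segment ℝ f.1 f.2 ⊆ ({e.1, e.2} ∩ {f.1, f.2} : Set Pt)

namespace PlaneNetwork

/-- The locus of a network: the union of all its (closed) edges. -/
def locus (N : PlaneNetwork) : Set Pt := ⋃ e ∈ N.Edg, segment ℝ e.1 e.2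

/-- A network is connected when its locus is path-connected. -/
def Connected (N : PlaneNetwork) : Prop := IsPathConnected N.locus

/-- `u` and `v` are joined by an edge of the network. -/
def IsEdge (N : PlaneNetwork) (u v : Pt) : Prop := (u, v) ∈ N.Edg ∨ (v, u) ∈ N.Edg

/-- A vertex is pendant if it is an endpoint of exactly one edge. -/
def IsPendantVertex (N : PlaneNetwork) (v : Pt) : Prop :=
  v ∈ N.V ∧ (N.Edg.filter (fun e => e.1 = v ∨ e.2 = v)).card = 1

/-- The number of pendant vertices of a network. -/
def pendantCount (N : PlaneNetwork) : ℕ := (N.V.filter fun v => N.IsPendantVertex v).card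

end PlaneNetwork

/-- The union of a set with all the segments in a list. -/
def insertSegs (X : Set Pt) (L : List (Pt × Pt)) : Set Pt :=
  X ∪ ⋃ s ∈ L, segment ℝ s.1 s.2

/-- The segments of the list are inserted iteratively: the endpoints of the first one lie
on `X`, and the endpoints of each subsequent segment lie on the union of `X` with the
previously inserted segments. -/
def ValidSegs (X : Set Pt) : List (Pt × Pt) → Prop
  | [] => True
  | s :: rest => s.1 ∈ X ∧ s.2 ∈ X ∧ ValidSegs (X ∪ segment ℝ s.1 s.2) rest

/-- A shortcut set for `X`: a finite sequence of iteratively inserted segments whose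
insertion strictly decreases the intrinsic diameter. -/
def IsShortcutSet (X : Set Pt) (L : List (Pt × Pt)) : Prop :=
  ValidSegs X L ∧ idiam (insertSegs X L) < idiam X

/-- `X` admits a shortcut set. -/
def HasShortcutSet (X : Set Pt) : Prop := ∃ L, IsShortcutSet X L

/-- The shortcut number: the minimum size of a shortcut set. -/
def scn (X : Set Pt) : ℕ :=
  sInf {k | ∃ L : List (Pt × Pt), L.length = k ∧ IsShortcutSet X L}



section Aux

lemma idist_le {X : Set Pt} {p q : Pt} (γ : ℝ → Pt) (hc : ContinuousOn γ (Set.Icc 0 1))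
    (him : γ '' Set.Icc 0 1 ⊆ X) (h0 : γ 0 = p) (h1 : γ 1 = q) :
    idist X p q ≤ eVariationOn γ (Set.Icc 0 1) := by
  refine (iInf_le _ γ).trans ?_
  exact (iInf_le _ hc).trans ((iInf_le _ him).trans ((iInf_le _ h0).trans (iInf_le _ h1)))

lemma le_idist {X : Set Pt} {p q : Pt} {c : ℝ≥0∞}
    (h : ∀ γ : ℝ → Pt, ContinuousOn γ (Set.Icc 0 1) → γ '' Set.Icc 0 1 ⊆ X →
      γ 0 = p → γ 1 = q → c ≤ eVariationOn γ (Set.Icc 0 1)) :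
    c ≤ idist X p q := by
  refine le_iInf fun γ => le_iInf fun hc => le_iInf fun him => le_iInf fun h0 => le_iInf fun h1 => h γ hc him h0 h1

lemma edist_le_idist {X : Set Pt} {p q : Pt} : edist p q ≤ idist X p q := by
  refine le_idist fun γ hc him h0 h1 => ?_
  have := eVariationOn.edist_le γ (Set.left_mem_Icc.2 zero_le_one) (Set.right_mem_Icc.2 zero_le_one)
  rwa [h0, h1] at this

lemma idist_self {X : Set Pt} {p : Pt} (hp : p ∈ X) : idist X p p = 0 := by
  refine le_antisymm ?_ zero_le
  refine (idist_le (fun _ => p) continuousOn_const ?_ rfl rfl).trans ?_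
  · rintro x ⟨t, -, rfl⟩; exact hp
  · exact le_of_eq (eVariationOn.constant_on (Set.subsingleton_singleton.anti (by rintro x ⟨t, -, rfl⟩; rfl)))

lemma idist_comm {X : Set Pt} {p q : Pt} : idist X p q = idist X q p := by
  have key : ∀ p q : Pt, idist X p q ≤ idist X q p := by
    intro p q
    refine le_idist fun γ hc him h0 h1 => ?_
    set δ : ℝ → Pt := fun t => γ (1 - t) with hδ
    have hanti : AntitoneOn (fun t : ℝ => 1 - t) (Set.Icc 0 1) := by
      intro a _ b _ hab; dsimp; linarith
    have himg : (fun t : ℝ => 1 - t) '' Set.Icc 0 1 = Set.Icc 0 1 := by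
      rw [Set.image_const_sub_Icc]; norm_num
    have hvar : eVariationOn δ (Set.Icc 0 1) = eVariationOn γ (Set.Icc 0 1) := by
      have := eVariationOn.comp_eq_of_antitoneOn γ (fun t : ℝ => 1 - t) hanti
      rw [himg] at this; exact this
    refine (idist_le δ ?_ ?_ (by simp [hδ, h1]) (by simp [hδ, h0])).trans hvar.le
    · exact hc.comp (by fun_prop) (fun x hx => by rw [← himg]; exact Set.mem_image_of_mem _ hx)
    · rintro x ⟨t, ht, rfl⟩
      exact him (Set.mem_image_of_mem _ (by rw [← himg]; exact Set.mem_image_of_mem _ ht))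
  exact le_antisymm (key p q) (key q p)

/-- A path on a general interval `[a,b]` witnesses `idist`. -/
lemma idist_le_eVar_Icc {X : Set Pt} {γ : ℝ → Pt} {a b : ℝ} (hab : a ≤ b)
    (hc : ContinuousOn γ (Set.Icc a b)) (him : γ '' Set.Icc a b ⊆ X) :
    idist X (γ a) (γ b) ≤ eVariationOn γ (Set.Icc a b) := by
  rcases eq_or_lt_of_le hab with rfl | hlt
  · rw [idist_self (him ⟨a, Set.mem_Icc.2 ⟨le_refl a, le_refl a⟩, rfl⟩)]; exact zero_le
  · set φ : ℝ → ℝ := fun s => (b - a) * s + a with hφ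
    have hmono : MonotoneOn φ (Set.Icc 0 1) := by
      intro x _ y _ hxy
      simp only [hφ]
      nlinarith
    have himg : φ '' Set.Icc 0 1 = Set.Icc a b := by
      rw [hφ]
      rw [image_affine_Icc' (by linarith : (0:ℝ) < b - a)]
      norm_num
    have hvar : eVariationOn (γ ∘ φ) (Set.Icc 0 1) = eVariationOn γ (Set.Icc a b) := by
      rw [eVariationOn.comp_eq_of_monotoneOn γ φ hmono, himg]
    have h0 : (γ ∘ φ) 0 = γ a := by simp [hφ]
    have h1 : (γ ∘ φ) 1 = γ b := by simp [hφ]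
    have hsub : ∀ t ∈ Set.Icc (0:ℝ) 1, φ t ∈ Set.Icc a b := fun t ht => himg ▸ Set.mem_image_of_mem _ ht
    refine (idist_le (γ ∘ φ) ?_ ?_ h0 h1).trans hvar.le
    · exact hc.comp (by fun_prop) hsub
    · rintro x ⟨t, ht, rfl⟩; exact him (Set.mem_image_of_mem _ (hsub t ht))

/-- Straight-line bound: if the segment from `x` to `y` is inside `X`. -/
lemma idist_le_edist_of_seg {X : Set Pt} {x y : Pt} (h : segment ℝ x y ⊆ X) :
    idist X x y ≤ edist x y := by
  set γ : ℝ → Pt := fun t => x + t • (y - x) with hγ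
  have h0 : γ 0 = x := by simp [hγ]
  have h1 : γ 1 = y := by simp [hγ]
  have him : γ '' Set.Icc 0 1 = segment ℝ x y := (segment_eq_image' ℝ x y).symm
  have hlip : LipschitzWith ‖y - x‖₊ γ := by
    refine LipschitzWith.of_dist_le_mul fun s t => ?_
    have : γ s - γ t = (s - t) • (y - x) := by simp [hγ]; module
    rw [dist_eq_norm, this, norm_smul]
    simp [Real.dist_eq, mul_comm]
  have hvar : eVariationOn γ (Set.Icc 0 1) ≤ edist x y := by
    have hcomp := LipschitzOnWith.comp_eVariationOn_le (hlip.lipschitzOnWith (s := Set.univ))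
      (Set.mapsTo_univ (id : ℝ → ℝ) (Set.Icc 0 1))
    have hid : eVariationOn (id : ℝ → ℝ) (Set.Icc 0 1) ≤ 1 := by
      have := MonotoneOn.eVariationOn_le (f := (id : ℝ → ℝ)) (s := Set.Icc (0:ℝ) 1)
        (fun a _ b _ h => h) (Set.left_mem_Icc.2 zero_le_one) (Set.right_mem_Icc.2 zero_le_one)
      simpa using this
    have : eVariationOn (γ ∘ id) (Set.Icc 0 1) ≤ ‖y - x‖₊ * eVariationOn (id : ℝ → ℝ) (Set.Icc 0 1) :=
      hcomp
    simp only [Function.comp_id] at this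
    refine this.trans ?_
    calc (‖y - x‖₊ : ℝ≥0∞) * eVariationOn (id : ℝ → ℝ) (Set.Icc 0 1)
        ≤ ‖y - x‖₊ * 1 := by exact mul_le_mul_right hid _
      _ = edist x y := by rw [mul_one, edist_comm, edist_eq_enorm_sub, enorm_eq_nnnorm]
  exact (idist_le γ (hlip.continuous.continuousOn) (him ▸ h) h0 h1).trans hvar

lemma exists_path_lt {X : Set Pt} {p q : Pt} {c : ℝ≥0∞} (h : idist X p q < c) :
    ∃ γ : ℝ → Pt, ContinuousOn γ (Set.Icc 0 1) ∧ γ '' Set.Icc 0 1 ⊆ X ∧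
      γ 0 = p ∧ γ 1 = q ∧ eVariationOn γ (Set.Icc 0 1) < c := by
  by_contra hcon
  push_neg at hcon
  have : c ≤ idist X p q := le_idist fun γ hc him h0 h1 => hcon γ hc him h0 h1
  exact absurd h (not_lt.2 this)

lemma idist_concat {X : Set Pt} {p r q : Pt} (γ₁ γ₂ : ℝ → Pt)
    (hc₁ : ContinuousOn γ₁ (Set.Icc 0 1)) (him₁ : γ₁ '' Set.Icc 0 1 ⊆ X)
    (h10 : γ₁ 0 = p) (h11 : γ₁ 1 = r)
    (hc₂ : ContinuousOn γ₂ (Set.Icc 0 1)) (him₂ : γ₂ '' Set.Icc 0 1 ⊆ X)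
    (h20 : γ₂ 0 = r) (h21 : γ₂ 1 = q) :
    idist X p q ≤ eVariationOn γ₁ (Set.Icc 0 1) + eVariationOn γ₂ (Set.Icc 0 1) := by
  classical
  set γ : ℝ → Pt := fun t => if t ≤ 1/2 then γ₁ (2*t) else γ₂ (2*t - 1) with hγ
  have key1 : ∀ t ∈ Set.Icc (0:ℝ) (1/2), γ t = γ₁ (2*t) := by
    intro t ht; simp only [hγ, if_pos ht.2]
  have key2 : ∀ t ∈ Set.Icc (1/2:ℝ) 1, γ t = γ₂ (2*t - 1) := by
    intro t ht
    rcases eq_or_lt_of_le ht.1 with h | h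
    · simp only [hγ, ← h]
      rw [if_pos le_rfl]
      norm_num [h11, h20]
    · simp only [hγ, if_neg (not_le.2 h)]
  have him1' : ∀ t ∈ Set.Icc (0:ℝ) (1/2), 2*t ∈ Set.Icc (0:ℝ) 1 := by
    intro t ht; constructor <;> [linarith [ht.1]; linarith [ht.2]]
  have him2' : ∀ t ∈ Set.Icc (1/2:ℝ) 1, 2*t - 1 ∈ Set.Icc (0:ℝ) 1 := by
    intro t ht; constructor <;> [linarith [ht.1]; linarith [ht.2]]
  have hc : ContinuousOn γ (Set.Icc 0 1) := by
    rw [hγ]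
    apply ContinuousOn.if
    · intro a ha
      have ha2 : a ∈ frontier (Set.Iic (1/2:ℝ)) := ha.2
      rw [frontier_Iic] at ha2
      rw [Set.mem_singleton_iff] at ha2
      subst ha2
      norm_num [h11, h20]
    · refine hc₁.comp (by fun_prop) fun t ht => ?_
      have h2 : t ≤ 1/2 := by
        have := ht.2
        rwa [show closure {a : ℝ | a ≤ 1/2} = Set.Iic (1/2) from isClosed_Iic.closure_eq,
          Set.mem_Iic] at this
      exact him1' t ⟨ht.1.1, h2⟩
    · refine hc₂.comp (by fun_prop) fun t ht => ?_
      have h2 : (1/2:ℝ) ≤ t := by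
        have := ht.2
        rw [show {a : ℝ | ¬ a ≤ 1/2} = Set.Ioi (1/2) from by ext x; simp [Set.mem_Ioi],
          closure_Ioi, Set.mem_Ici] at this
        exact this
      exact him2' t ⟨h2, ht.1.2⟩
  have him : γ '' Set.Icc 0 1 ⊆ X := by
    rintro x ⟨t, ht, rfl⟩
    by_cases h : t ≤ 1/2
    · rw [key1 t ⟨ht.1, h⟩]
      exact him₁ (Set.mem_image_of_mem _ (him1' t ⟨ht.1, h⟩))
    · rw [key2 t ⟨le_of_lt (not_le.1 h), ht.2⟩]
      exact him₂ (Set.mem_image_of_mem _ (him2' t ⟨le_of_lt (not_le.1 h), ht.2⟩))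
  have h0 : γ 0 = p := by rw [key1 0 ⟨le_rfl, by norm_num⟩]; simpa using h10
  have h1 : γ 1 = q := by rw [key2 1 ⟨by norm_num, le_rfl⟩]; norm_num [h21]
  have hvar : eVariationOn γ (Set.Icc 0 1) ≤
      eVariationOn γ₁ (Set.Icc 0 1) + eVariationOn γ₂ (Set.Icc 0 1) := by
    have hsplit := eVariationOn.Icc_add_Icc γ (s := Set.Icc (0:ℝ) 1)
      (by norm_num : (0:ℝ) ≤ 1/2) (by norm_num : (1/2:ℝ) ≤ 1)
      (by constructor <;> norm_num)
    have e1 : Set.Icc (0:ℝ) 1 ∩ Set.Icc 0 (1/2) = Set.Icc (0:ℝ) (1/2) := by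
      rw [Set.Icc_inter_Icc]; norm_num
    have e2 : Set.Icc (0:ℝ) 1 ∩ Set.Icc (1/2) 1 = Set.Icc (1/2:ℝ) 1 := by
      rw [Set.Icc_inter_Icc]; norm_num
    have e3 : Set.Icc (0:ℝ) 1 ∩ Set.Icc 0 1 = Set.Icc (0:ℝ) 1 := Set.inter_self _
    rw [e1, e2, e3] at hsplit
    rw [← hsplit]
    have v1 : eVariationOn γ (Set.Icc 0 (1/2)) ≤ eVariationOn γ₁ (Set.Icc 0 1) := by
      rw [eVariationOn.eq_of_eqOn (fun t ht => key1 t ht)]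
      have hmono : MonotoneOn (fun t : ℝ => 2*t) (Set.Icc 0 (1/2)) := by
        intro a _ b _ hab; dsimp; linarith
      have := eVariationOn.comp_eq_of_monotoneOn γ₁ (fun t : ℝ => 2*t) hmono
      rw [show (fun t => γ₁ (2*t)) = γ₁ ∘ (fun t : ℝ => 2*t) from rfl, this]
      refine eVariationOn.mono γ₁ ?_
      rintro x ⟨t, ht, rfl⟩; exact him1' t ht
    have v2 : eVariationOn γ (Set.Icc (1/2) 1) ≤ eVariationOn γ₂ (Set.Icc 0 1) := by
      rw [eVariationOn.eq_of_eqOn (fun t ht => key2 t ht)]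
      have hmono : MonotoneOn (fun t : ℝ => 2*t - 1) (Set.Icc (1/2) 1) := by
        intro a _ b _ hab; dsimp; linarith
      have := eVariationOn.comp_eq_of_monotoneOn γ₂ (fun t : ℝ => 2*t - 1) hmono
      rw [show (fun t => γ₂ (2*t - 1)) = γ₂ ∘ (fun t : ℝ => 2*t - 1) from rfl, this]
      refine eVariationOn.mono γ₂ ?_
      rintro x ⟨t, ht, rfl⟩; exact him2' t ht
    exact add_le_add v1 v2
  exact (idist_le γ hc him h0 h1).trans hvar

lemma idist_triangle {X : Set Pt} (p r q : Pt) :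
    idist X p q ≤ idist X p r + idist X r q := by
  by_cases htop : idist X p r + idist X r q = ⊤
  · rw [htop]; exact le_top
  have h1 : idist X p r ≠ ⊤ := fun h => htop (by rw [h]; exact top_add _)
  have h2 : idist X r q ≠ ⊤ := fun h => htop (by rw [h]; exact add_top _)
  refine ENNReal.le_of_forall_pos_le_add fun ε hε hfin => ?_
  have hε2 : (0:ℝ≥0∞) < ε/2 := by
    rw [ENNReal.div_pos_iff]
    exact ⟨by exact_mod_cast hε.ne', by norm_num⟩
  obtain ⟨γ₁, hc₁, him₁, h10, h11, hv₁⟩ := exists_path_lt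
    (show idist X p r < idist X p r + ε/2 from
      ENNReal.lt_add_right h1 (by simpa using hε2.ne'))
  obtain ⟨γ₂, hc₂, him₂, h20, h21, hv₂⟩ := exists_path_lt
    (show idist X r q < idist X r q + ε/2 from
      ENNReal.lt_add_right h2 (by simpa using hε2.ne'))
  calc idist X p q ≤ eVariationOn γ₁ (Set.Icc 0 1) + eVariationOn γ₂ (Set.Icc 0 1) :=
        idist_concat γ₁ γ₂ hc₁ him₁ h10 h11 hc₂ him₂ h20 h21
    _ ≤ (idist X p r + ε/2) + (idist X r q + ε/2) := add_le_add hv₁.le hv₂.le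
    _ = idist X p r + idist X r q + (ε/2 + ε/2) := by ring
    _ = idist X p r + idist X r q + ε := by rw [ENNReal.add_halves]

lemma isClosed_seg (x y : Pt) : IsClosed (segment ℝ x y) := by
  rw [segment_eq_image']
  exact (isCompact_Icc.image (by fun_prop)).isClosed

namespace PlaneNetwork

lemma seg_subset_locus (N : PlaneNetwork) {e : Pt × Pt} (he : e ∈ N.Edg) :
    segment ℝ e.1 e.2 ⊆ N.locus := fun x hx =>
  Set.mem_biUnion he hx

lemma seg_subset_locus' (N : PlaneNetwork) {u v : Pt} (h : N.IsEdge u v) :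
    segment ℝ u v ⊆ N.locus := by
  rcases h with h | h
  · exact N.seg_subset_locus h
  · rw [segment_symm]; exact N.seg_subset_locus h

lemma gateway (N : PlaneNetwork) {e : Pt × Pt} (he : e ∈ N.Edg) {x z : Pt}
    (hx : x ∈ openSegment ℝ e.1 e.2) (hz : z ∉ openSegment ℝ e.1 e.2) :
    min (idist N.locus z e.1 + edist e.1 x) (idist N.locus z e.2 + edist e.2 x) ≤
      idist N.locus z x := by
  have hne : e.1 ≠ e.2 := N.ends_ne e he
  set R : Set Pt := ⋃ f ∈ N.Edg \ {e}, segment ℝ f.1 f.2 with hR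
  have hRclosed : IsClosed R := by
    refine Set.Finite.isClosed_biUnion ((N.Edg \ {e}).finite_toSet) fun f _ => isClosed_seg _ _
  have hlocus_eq : N.locus = segment ℝ e.1 e.2 ∪ R := by
    rw [hR, PlaneNetwork.locus]
    ext w
    simp only [Set.mem_iUnion, Set.mem_union, Finset.mem_sdiff, Finset.mem_singleton]
    constructor
    · rintro ⟨f, hf, hw⟩
      by_cases hfe : f = e
      · subst hfe; exact Or.inl hw
      · exact Or.inr ⟨f, ⟨hf, hfe⟩, hw⟩
    · rintro (hw | ⟨f, ⟨hf, -⟩, hw⟩)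
      · exact ⟨e, he, hw⟩
      · exact ⟨f, hf, hw⟩
  have hRseg : R ∩ segment ℝ e.1 e.2 ⊆ {e.1, e.2} := by
    rintro w ⟨hwR, hwseg⟩
    rw [hR] at hwR
    simp only [Set.mem_iUnion] at hwR
    obtain ⟨f, hf, hwf⟩ := hwR
    rw [Finset.mem_sdiff, Finset.mem_singleton] at hf
    have := N.plane e he f hf.1 (Ne.symm hf.2) ⟨hwseg, hwf⟩
    exact this.1
  have hxseg : x ∈ segment ℝ e.1 e.2 := openSegment_subset_segment ℝ _ _ hx
  have hxR : x ∉ R := by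
    intro hxR
    have := hRseg ⟨hxR, hxseg⟩
    rcases this with h | h
    · rw [h] at hx; exact hne (left_mem_openSegment_iff.1 hx)
    · rw [Set.mem_singleton_iff] at h; rw [h] at hx
      exact hne (right_mem_openSegment_iff.1 hx)
  refine le_idist fun γ hc him h0 h1 => ?_
  -- the path must hit an endpoint of e
  have hS : ∃ t₀ ∈ Set.Icc (0:ℝ) 1, γ t₀ = e.1 ∨ γ t₀ = e.2 := by
    by_contra hcon
    push_neg at hcon
    set K := γ '' Set.Icc 0 1 with hK
    have hKpc : IsPreconnected K := (isPreconnected_Icc).image γ hc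
    have hKavoid : ∀ w ∈ K, w ≠ e.1 ∧ w ≠ e.2 := by
      rintro w ⟨t, ht, rfl⟩; exact hcon t ht
    have hKlocus : K ⊆ N.locus := him
    have hsub : K ⊆ Rᶜ ∪ (segment ℝ e.1 e.2)ᶜ := by
      intro w hw
      by_cases hwR : w ∈ R
      · right
        intro hwseg
        rcases hRseg ⟨hwR, hwseg⟩ with h | h
        · exact (hKavoid w hw).1 h
        · exact (hKavoid w hw).2 h
      · exact Or.inl hwR
    have hUV : (K ∩ (Rᶜ ∩ (segment ℝ e.1 e.2)ᶜ)) = ∅ := by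
      ext w
      simp only [Set.mem_inter_iff, Set.mem_compl_iff, Set.mem_empty_iff_false, iff_false]
      rintro ⟨hw, hwR, hwseg⟩
      rcases hlocus_eq ▸ hKlocus hw with h | h
      · exact hwseg h
      · exact hwR h
    have hKU : (K ∩ Rᶜ).Nonempty := ⟨x, ⟨1, Set.right_mem_Icc.2 zero_le_one, h1⟩, hxR⟩
    have hKV : K ∩ (segment ℝ e.1 e.2)ᶜ = ∅ := by
      by_contra hcon2
      rw [← Ne, ← Set.nonempty_iff_ne_empty] at hcon2
      obtain ⟨w, hw⟩ := hKpc Rᶜ (segment ℝ e.1 e.2)ᶜ hRclosed.isOpen_compl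
        (isClosed_seg e.1 e.2).isOpen_compl hsub hKU hcon2
      rw [← Set.mem_empty_iff_false w, ← hUV]
      exact ⟨hw.1, hw.2⟩
    -- so K ⊆ segment, hence z ∈ open segment, contradiction
    have hzK : z ∈ K := ⟨0, Set.left_mem_Icc.2 zero_le_one, h0⟩
    have hzseg : z ∈ segment ℝ e.1 e.2 := by
      by_contra hzs
      rw [← Set.mem_empty_iff_false z, ← hKV]
      exact ⟨hzK, hzs⟩
    have hzopen : z ∈ openSegment ℝ e.1 e.2 := by
      have := insert_endpoints_openSegment (𝕜 := ℝ) e.1 e.2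
      rw [← this] at hzseg
      rcases hzseg with h | h | h
      · exact absurd h (hKavoid z hzK).1
      · exact absurd h (hKavoid z hzK).2
      · exact h
    exact hz hzopen
  obtain ⟨t₀, ht₀, hw⟩ := hS
  have hsplit := eVariationOn.Icc_add_Icc γ (s := Set.Icc (0:ℝ) 1) ht₀.1 ht₀.2 ht₀
  have e1 : Set.Icc (0:ℝ) 1 ∩ Set.Icc 0 t₀ = Set.Icc 0 t₀ := by
    rw [Set.Icc_inter_Icc]
    congr 1 <;> simp [ht₀.1, ht₀.2, max_eq_left, min_eq_right]
  have e2 : Set.Icc (0:ℝ) 1 ∩ Set.Icc t₀ 1 = Set.Icc t₀ 1 := by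
    rw [Set.Icc_inter_Icc]
    congr 1 <;> simp [ht₀.1, ht₀.2, max_eq_right, min_eq_left]
  have e3 : Set.Icc (0:ℝ) 1 ∩ Set.Icc 0 1 = Set.Icc (0:ℝ) 1 := Set.inter_self _
  rw [e1, e2, e3] at hsplit
  have hb1 : idist N.locus z (γ t₀) ≤ eVariationOn γ (Set.Icc 0 t₀) := by
    have := idist_le_eVar_Icc (X := N.locus) (γ := γ) ht₀.1
      (hc.mono (Set.Icc_subset_Icc le_rfl ht₀.2))
      (fun w ⟨t, ht, hh⟩ => him ⟨t, ⟨ht.1, ht.2.trans ht₀.2⟩, hh⟩)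
    rwa [h0] at this
  have hb2 : edist (γ t₀) x ≤ eVariationOn γ (Set.Icc t₀ 1) := by
    have := eVariationOn.edist_le γ (Set.right_mem_Icc.2 ht₀.2) (Set.left_mem_Icc.2 ht₀.2)
    rwa [h1, edist_comm] at this
  have key : idist N.locus z (γ t₀) + edist (γ t₀) x ≤ eVariationOn γ (Set.Icc 0 1) := by
    rw [← hsplit]; exact add_le_add hb1 hb2
  rcases hw with h | h
  · exact (min_le_left _ _).trans (by rw [← h]; exact key)
  · exact (min_le_right _ _).trans (by rw [← h]; exact key)

end PlaneNetwork

namespace PlaneNetwork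

lemma IsEdge.symm {N : PlaneNetwork} {u v : Pt} (h : N.IsEdge u v) : N.IsEdge v u :=
  h.elim Or.inr Or.inl

lemma IsEdge.ne {N : PlaneNetwork} {u v : Pt} (h : N.IsEdge u v) : u ≠ v := by
  rcases h with h | h
  · exact N.ends_ne _ h
  · exact (N.ends_ne _ h).symm

lemma gateway' (N : PlaneNetwork) {u v : Pt} (he : N.IsEdge u v) {x z : Pt}
    (hx : x ∈ openSegment ℝ u v) (hz : z ∉ openSegment ℝ u v) :
    min (idist N.locus z u + edist u x) (idist N.locus z v + edist v x) ≤
      idist N.locus z x := by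
  rcases he with h | h
  · exact N.gateway h hx hz
  · rw [min_comm]
    exact N.gateway h (by rwa [openSegment_symm] at hx) (by rwa [openSegment_symm] at hz)

lemma gate_min (N : PlaneNetwork) {a b w z : Pt} (he : N.IsEdge a b)
    (hw : w ∈ segment ℝ a b) (hz : z ∉ openSegment ℝ a b) :
    idist N.locus z a + edist a w ≤ idist N.locus z w ∨
      idist N.locus z b + edist b w ≤ idist N.locus z w := by
  by_cases hwo : w ∈ openSegment ℝ a b
  · exact min_le_iff.1 (N.gateway' he hwo hz)
  · rw [← insert_endpoints_openSegment] at hw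
    rcases hw with rfl | rfl | hw
    · left; rw [edist_self, add_zero]
    · right; rw [edist_self, add_zero]
    · exact absurd hw hwo


end PlaneNetwork

lemma edist_param (u v : Pt) {r : ℝ} (h0 : 0 ≤ r) :
    edist u (u + r • (v - u)) = ENNReal.ofReal (r * ‖v - u‖) := by
  rw [edist_dist, dist_eq_norm]
  have : u - (u + r • (v - u)) = (-r) • (v - u) := by module
  rw [this, norm_smul, norm_neg, Real.norm_eq_abs, abs_of_nonneg h0]

lemma edist_param' (u v : Pt) {r : ℝ} (h1 : r ≤ 1) :
    edist v (u + r • (v - u)) = ENNReal.ofReal ((1 - r) * ‖v - u‖) := by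
  have hrw : u + r • (v - u) = v + (1 - r) • (u - v) := by module
  rw [hrw, edist_param v u (by linarith), norm_sub_rev]

namespace PlaneNetwork

/-- Key perturbation lemma: if `p` on edge `uv` maximizes intrinsic distance from `q`,
then the distance from `q` to `p` goes through `u`. -/
lemma keyB (N : PlaneNetwork) {u v p q : Pt} (he : N.IsEdge u v)
    (hp : p ∈ segment ℝ u v) (hq : q ∉ openSegment ℝ u v)
    (hmax : ∀ x ∈ N.locus, idist N.locus q x ≤ idist N.locus q p)
    (hfin : idist N.locus q p ≠ ⊤) :
    idist N.locus q u + edist u p ≤ idist N.locus q p := by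
  have hne : u ≠ v := by
    rcases he with h | h
    · exact N.ends_ne _ h
    · exact (N.ends_ne _ h).symm
  set L : ℝ := ‖v - u‖ with hLdef
  have hL : 0 < L := by
    rw [hLdef, norm_pos_iff, sub_ne_zero]
    exact hne.symm
  by_contra hcon
  rw [not_le] at hcon
  set D := idist N.locus q p with hD
  set cu := idist N.locus q u with hcu
  set cv := idist N.locus q v with hcv
  -- parametrize p
  rw [segment_eq_image'] at hp
  obtain ⟨t, ht, hpt⟩ := hp
  have ht1 : t ≤ 1 := ht.2
  have hpu : p ≠ u := by
    rintro rfl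
    rw [edist_self, add_zero] at hcon
    exact lt_irrefl _ hcon
  have ht0 : 0 < t := by
    rcases lt_or_eq_of_le ht.1 with h | h
    · exact h
    · exfalso; apply hpu; rw [← hpt, ← h]; simp
  have hedup : edist u p = ENNReal.ofReal (t * L) := by rw [← hpt]; exact edist_param u v ht.1
  have hedvp : edist v p = ENNReal.ofReal ((1 - t) * L) := by
    rw [← hpt]; exact edist_param' u v ht.2
  -- triangle through v
  have htriv : D ≤ cv + ENNReal.ofReal ((1 - t) * L) := by
    rw [← hedvp]
    refine (idist_triangle q v p).trans (add_le_add_right ?_ _)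
    refine idist_le_edist_of_seg ?_
    refine Set.Subset.trans ?_ (N.seg_subset_locus' he)
    refine (convex_segment u v).segment_subset (right_mem_segment ℝ u v) ?_
    rw [segment_eq_image']; exact ⟨t, ht, hpt⟩
  -- choose the perturbation parameter s
  obtain ⟨s, hs0, hst, hb1, hb2⟩ : ∃ s : ℝ, 0 < s ∧ s < t ∧
      D < cu + ENNReal.ofReal (s * L) ∧ D < cv + ENNReal.ofReal ((1 - s) * L) := by
    by_cases hcutop : cu = ⊤
    · refine ⟨t/2, by linarith, by linarith, ?_, ?_⟩
      · rw [hcutop, top_add]; exact hfin.lt_top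
      · rcases eq_or_ne cv ⊤ with h | h
        · rw [h, top_add]; exact hfin.lt_top
        · -- from htriv and t/2 < t
          calc D ≤ cv + ENNReal.ofReal ((1 - t) * L) := htriv
            _ < cv + ENNReal.ofReal ((1 - t/2) * L) := by
                refine ENNReal.add_lt_add_left h ?_
                refine ENNReal.ofReal_lt_ofReal_iff ?_ |>.2 ?_
                · nlinarith
                · nlinarith
    · set a := cu.toReal with ha
      set d := D.toReal with hd
      have hlt_real : d < a + t * L := by
        have hfin2 : cu + ENNReal.ofReal (t * L) ≠ ⊤ := by
          simp [hcutop]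
        have := (ENNReal.toReal_lt_toReal hfin hfin2).2 (by rw [← hedup]; exact hcon)
        rwa [ENNReal.toReal_add hcutop (by simp), ENNReal.toReal_ofReal
          (by positivity)] at this
      set ε := (a + t * L - d) / 2 with hε
      have hεpos : 0 < ε := by rw [hε]; linarith
      set sgap := min (t/2) (ε/L) with hsgap
      have hsgap0 : 0 < sgap := lt_min (by linarith) (by positivity)
      have hsgapt : sgap ≤ t/2 := min_le_left _ _
      have hsgapε : sgap * L ≤ ε := by
        have : sgap ≤ ε / L := min_le_right _ _
        calc sgap * L ≤ (ε/L) * L := by nlinarith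
          _ = ε := by field_simp
      refine ⟨t - sgap, by linarith, by linarith, ?_, ?_⟩
      · -- u branch
        have hreal : d < a + (t - sgap) * L := by nlinarith
        calc D = ENNReal.ofReal d := by rw [hd, ENNReal.ofReal_toReal hfin]
          _ < ENNReal.ofReal (a + (t - sgap) * L) := by
              apply ENNReal.ofReal_lt_ofReal_iff ?_ |>.2 hreal
              have : 0 ≤ d := ENNReal.toReal_nonneg
              linarith
          _ = ENNReal.ofReal a + ENNReal.ofReal ((t - sgap) * L) := by
              rw [ENNReal.ofReal_add (by exact ENNReal.toReal_nonneg) (by nlinarith)]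
          _ = cu + ENNReal.ofReal ((t - sgap) * L) := by
              rw [ha, ENNReal.ofReal_toReal hcutop]
      · -- v branch
        rcases eq_or_ne cv ⊤ with h | h
        · rw [h, top_add]; exact hfin.lt_top
        · have htriv_real : d ≤ cv.toReal + (1 - t) * L := by
            have hfin2 : cv + ENNReal.ofReal ((1 - t) * L) ≠ ⊤ := by simp [h]
            have := (ENNReal.toReal_le_toReal hfin hfin2).2 htriv
            rwa [ENNReal.toReal_add h (by simp), ENNReal.toReal_ofReal
              (by nlinarith)] at this
          have hreal : d < cv.toReal + (1 - (t - sgap)) * L := by nlinarith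
          calc D = ENNReal.ofReal d := by rw [hd, ENNReal.ofReal_toReal hfin]
            _ < ENNReal.ofReal (cv.toReal + (1 - (t - sgap)) * L) := by
                apply ENNReal.ofReal_lt_ofReal_iff ?_ |>.2 hreal
                have : 0 ≤ d := ENNReal.toReal_nonneg
                linarith
            _ = ENNReal.ofReal cv.toReal + ENNReal.ofReal ((1 - (t - sgap)) * L) := by
                rw [ENNReal.ofReal_add (by exact ENNReal.toReal_nonneg) (by nlinarith)]
            _ = cv + ENNReal.ofReal ((1 - (t - sgap)) * L) := by
                rw [ENNReal.ofReal_toReal h]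
  -- the perturbed point
  set x := u + s • (v - u) with hx
  have hs1 : s < 1 := lt_of_lt_of_le hst ht.2
  have hxopen : x ∈ openSegment ℝ u v := by
    rw [openSegment_eq_image']
    exact ⟨s, ⟨hs0, hs1⟩, rfl⟩
  have hxlocus : x ∈ N.locus := N.seg_subset_locus' he
    (openSegment_subset_segment ℝ u v hxopen)
  have hgw := N.gateway' he hxopen hq
  have hxle : idist N.locus q x ≤ D := hmax x hxlocus
  have hedux : edist u x = ENNReal.ofReal (s * L) := edist_param u v hs0.le
  have hedvx : edist v x = ENNReal.ofReal ((1 - s) * L) := edist_param' u v hs1.le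
  have : D < idist N.locus q x := by
    calc D < min (cu + edist u x) (cv + edist v x) := by
          rw [hedux, hedvx]; exact lt_min hb1 hb2
      _ ≤ idist N.locus q x := hgw
  exact absurd hxle (not_le.2 this)

end PlaneNetwork

namespace PlaneNetwork

/-- The four endpoint equalities, packaged. -/
lemma endpoint_eq (N : PlaneNetwork) {u v p q : Pt} (he : N.IsEdge u v)
    (hp : p ∈ segment ℝ u v) (hq : q ∉ openSegment ℝ u v)
    (hmax : ∀ x ∈ N.locus, idist N.locus q x ≤ idist N.locus q p) :
    idist N.locus p q = edist p u + idist N.locus u q := by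
  have hpu_loc : segment ℝ p u ⊆ N.locus :=
    ((convex_segment u v).segment_subset hp (left_mem_segment ℝ u v)).trans
      (N.seg_subset_locus' he)
  have hle : idist N.locus p q ≤ edist p u + idist N.locus u q :=
    (idist_triangle p u q).trans (add_le_add_left (idist_le_edist_of_seg hpu_loc) _)
  refine le_antisymm hle ?_
  by_cases hfin : idist N.locus q p = ⊤
  · have htop : idist N.locus p q = ⊤ := by rw [idist_comm]; exact hfin
    rw [htop]; exact le_top
  · have := N.keyB he hp hq hmax hfin
    rw [idist_comm (p := q) (q := u), edist_comm, idist_comm (p := q) (q := p)] at this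
    rwa [add_comm]

lemma distinct_edge_inter (N : PlaneNetwork) {u v u' v' : Pt}
    (he : N.IsEdge u v) (he' : N.IsEdge u' v') (hdiff : ({u, v} : Set Pt) ≠ {u', v'}) :
    segment ℝ u v ∩ segment ℝ u' v' ⊆ ({u, v} ∩ {u', v'} : Set Pt) := by
  have hsetsymm : ∀ a b : Pt, ({a, b} : Set Pt) = {b, a} := fun a b => Set.pair_comm a b
  rcases he with h | h <;> rcases he' with h' | h'
  · refine N.plane (u, v) h (u', v') h' ?_
    rintro hEq
    exact hdiff (by rw [Prod.mk.injEq] at hEq; rw [hEq.1, hEq.2])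
  · have := N.plane (u, v) h (v', u') h' ?_
    · rw [show segment ℝ (v', u').1 (v', u').2 = segment ℝ u' v' from segment_symm ℝ v' u'] at this
      rwa [show ({(v', u').1, (v', u').2} : Set Pt) = {u', v'} from hsetsymm v' u'] at this
    · rintro hEq
      rw [Prod.mk.injEq] at hEq
      exact hdiff (by rw [hEq.1, hEq.2, hsetsymm])
  · have := N.plane (v, u) h (u', v') h' ?_
    · rw [show segment ℝ (v, u).1 (v, u).2 = segment ℝ u v from segment_symm ℝ v u] at this
      rwa [show ({(v, u).1, (v, u).2} : Set Pt) = {u, v} from hsetsymm v u] at this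
    · rintro hEq
      rw [Prod.mk.injEq] at hEq
      exact hdiff (by rw [← hEq.1, ← hEq.2, hsetsymm])
  · have := N.plane (v, u) h (v', u') h' ?_
    · rw [show segment ℝ (v, u).1 (v, u).2 = segment ℝ u v from segment_symm ℝ v u,
        show segment ℝ (v', u').1 (v', u').2 = segment ℝ u' v' from segment_symm ℝ v' u'] at this
      rwa [show ({(v, u).1, (v, u).2} : Set Pt) = {u, v} from hsetsymm v u,
        show ({(v', u').1, (v', u').2} : Set Pt) = {u', v'} from hsetsymm v' u'] at this
    · rintro hEq
      rw [Prod.mk.injEq] at hEq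
      exact hdiff (by rw [← hEq.1, ← hEq.2, hsetsymm])

end PlaneNetwork


end Aux

/-- If `p`, `q` are diametral points lying on two different non-pendant edges
`uv` and `u'v'`, then the diameter can be realized through each of the four endpoints, and
there are two shortest `p`-`q` paths `P₁`, `P₂` with either `u,u' ∈ P₁` and `v,v' ∈ P₂`,
or `u,v' ∈ P₁` and `v,u' ∈ P₂`. -/
theorem stmt6 (N : PlaneNetwork) (hconn : N.Connected) (u v u' v' p q : Pt)
    (he : N.IsEdge u v) (he' : N.IsEdge u' v')
    (hnp : ¬N.IsPendantVertex u ∧ ¬N.IsPendantVertex v)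
    (hnp' : ¬N.IsPendantVertex u' ∧ ¬N.IsPendantVertex v')
    (hdiff : ({u, v} : Set Pt) ≠ {u', v'})
    (hp : p ∈ segment ℝ u v) (hq : q ∈ segment ℝ u' v')
    (hdiam : idist N.locus p q = idiam N.locus) :
    (idist N.locus p q = edist p u + idist N.locus u q ∧
     idist N.locus p q = edist p v + idist N.locus v q ∧
     idist N.locus p q = edist q u' + idist N.locus u' p ∧
     idist N.locus p q = edist q v' + idist N.locus v' p) ∧
    ((idist N.locus p q = edist p u + idist N.locus u u' + edist u' q ∧
      idist N.locus p q = edist p v + idist N.locus v v' + edist v' q) ∨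
     (idist N.locus p q = edist p u + idist N.locus u v' + edist v' q ∧
      idist N.locus p q = edist p v + idist N.locus v u' + edist u' q)) := by
  have huvne : u ≠ v := he.ne
  have hu'v'ne : u' ≠ v' := he'.ne
  have hinter := N.distinct_edge_inter he he' hdiff
  have hno : ∀ w ∈ segment ℝ u v, w ∉ openSegment ℝ u' v' := by
    intro w hw hwo
    have hm := (hinter ⟨hw, openSegment_subset_segment ℝ u' v' hwo⟩).2
    rcases hm with rfl | rfl
    · exact hu'v'ne (left_mem_openSegment_iff.1 hwo)
    · exact hu'v'ne (right_mem_openSegment_iff.1 hwo)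
  have hno' : ∀ w ∈ segment ℝ u' v', w ∉ openSegment ℝ u v := by
    intro w hw hwo
    have hm := (hinter ⟨openSegment_subset_segment ℝ u v hwo, hw⟩).1
    rcases hm with rfl | rfl
    · exact huvne (left_mem_openSegment_iff.1 hwo)
    · exact huvne (right_mem_openSegment_iff.1 hwo)
  have hpX : p ∈ N.locus := N.seg_subset_locus' he hp
  have hqX : q ∈ N.locus := N.seg_subset_locus' he' hq
  have hqno : q ∉ openSegment ℝ u v := hno' q hq
  have hpno' : p ∉ openSegment ℝ u' v' := hno p hp
  have hle_diam : ∀ z ∈ N.locus, ∀ x ∈ N.locus, idist N.locus z x ≤ idiam N.locus := by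
    intro z hz x hx
    have h1 : idist N.locus z x ≤ ecc N.locus z :=
      le_iSup₂ (f := fun r (_ : r ∈ N.locus) => idist N.locus z r) x hx
    have h2 : ecc N.locus z ≤ idiam N.locus :=
      le_iSup₂ (f := fun r (_ : r ∈ N.locus) => ecc N.locus r) z hz
    exact h1.trans h2
  have hmax_q : ∀ x ∈ N.locus, idist N.locus q x ≤ idist N.locus q p := by
    intro x hx
    calc idist N.locus q x ≤ idiam N.locus := hle_diam q hqX x hx
      _ = idist N.locus p q := hdiam.symm
      _ = idist N.locus q p := idist_comm
  have hmax_p : ∀ x ∈ N.locus, idist N.locus p x ≤ idist N.locus p q := by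
    intro x hx
    calc idist N.locus p x ≤ idiam N.locus := hle_diam p hpX x hx
      _ = idist N.locus p q := hdiam.symm
  have eq1 : idist N.locus p q = edist p u + idist N.locus u q :=
    N.endpoint_eq he hp hqno hmax_q
  have eq2 : idist N.locus p q = edist p v + idist N.locus v q := by
    refine N.endpoint_eq he.symm ?_ ?_ hmax_q
    · rwa [segment_symm]
    · rwa [openSegment_symm]
  have hmax_p' : ∀ x ∈ N.locus, idist N.locus p x ≤ idist N.locus p q := hmax_p
  have eq3 : idist N.locus p q = edist q u' + idist N.locus u' p := by
    rw [idist_comm]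
    exact N.endpoint_eq he' hq hpno' hmax_p
  have eq4 : idist N.locus p q = edist q v' + idist N.locus v' p := by
    rw [idist_comm]
    refine N.endpoint_eq he'.symm ?_ ?_ hmax_p
    · rwa [segment_symm]
    · rwa [openSegment_symm]
  refine ⟨⟨eq1, eq2, eq3, eq4⟩, ?_⟩
  -- lower bounds
  have hseg_pu : segment ℝ p u ⊆ N.locus :=
    ((convex_segment u v).segment_subset hp (left_mem_segment ℝ u v)).trans
      (N.seg_subset_locus' he)
  have hseg_pv : segment ℝ p v ⊆ N.locus :=
    ((convex_segment u v).segment_subset hp (right_mem_segment ℝ u v)).trans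
      (N.seg_subset_locus' he)
  have hseg_u'q : segment ℝ u' q ⊆ N.locus :=
    ((convex_segment u' v').segment_subset (left_mem_segment ℝ u' v') hq).trans
      (N.seg_subset_locus' he')
  have hseg_v'q : segment ℝ v' q ⊆ N.locus :=
    ((convex_segment u' v').segment_subset (right_mem_segment ℝ u' v') hq).trans
      (N.seg_subset_locus' he')
  have lb : ∀ a b : Pt, segment ℝ p a ⊆ N.locus → segment ℝ b q ⊆ N.locus →
      idist N.locus p q ≤ edist p a + idist N.locus a b + edist b q := by
    intro a b h1 h2
    calc idist N.locus p q ≤ idist N.locus p a + idist N.locus a q := idist_triangle p a q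
      _ ≤ idist N.locus p a + (idist N.locus a b + idist N.locus b q) :=
          add_le_add_right (idist_triangle a b q) _
      _ ≤ edist p a + (idist N.locus a b + edist b q) :=
          add_le_add (idist_le_edist_of_seg h1)
            (add_le_add_right (idist_le_edist_of_seg h2) _)
      _ = edist p a + idist N.locus a b + edist b q := (add_assoc _ _ _).symm
  have hlb1 := lb u u' hseg_pu hseg_u'q
  have hlb2 := lb u v' hseg_pu hseg_v'q
  have hlb3 := lb v u' hseg_pv hseg_u'q
  have hlb4 := lb v v' hseg_pv hseg_v'q
  -- row upper bounds via the gate lemma at q's edge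
  have row_u : edist p u + idist N.locus u u' + edist u' q = idist N.locus p q ∨
      edist p u + idist N.locus u v' + edist v' q = idist N.locus p q := by
    rcases N.gate_min he' hq (hno u (left_mem_segment ℝ u v)) with h | h
    · left
      refine le_antisymm ?_ hlb1
      calc edist p u + idist N.locus u u' + edist u' q
          = edist p u + (idist N.locus u u' + edist u' q) := add_assoc _ _ _
        _ ≤ edist p u + idist N.locus u q := add_le_add_right h _
        _ = idist N.locus p q := eq1.symm
    · right
      refine le_antisymm ?_ hlb2
      calc edist p u + idist N.locus u v' + edist v' q
          = edist p u + (idist N.locus u v' + edist v' q) := add_assoc _ _ _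
        _ ≤ edist p u + idist N.locus u q := add_le_add_right h _
        _ = idist N.locus p q := eq1.symm
  have row_v : edist p v + idist N.locus v u' + edist u' q = idist N.locus p q ∨
      edist p v + idist N.locus v v' + edist v' q = idist N.locus p q := by
    rcases N.gate_min he' hq (hno v (right_mem_segment ℝ u v)) with h | h
    · left
      refine le_antisymm ?_ hlb3
      calc edist p v + idist N.locus v u' + edist u' q
          = edist p v + (idist N.locus v u' + edist u' q) := add_assoc _ _ _
        _ ≤ edist p v + idist N.locus v q := add_le_add_right h _
        _ = idist N.locus p q := eq2.symm
    · right
      refine le_antisymm ?_ hlb4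
      calc edist p v + idist N.locus v v' + edist v' q
          = edist p v + (idist N.locus v v' + edist v' q) := add_assoc _ _ _
        _ ≤ edist p v + idist N.locus v q := add_le_add_right h _
        _ = idist N.locus p q := eq2.symm
  -- column upper bounds via the gate lemma at p's edge
  have col_u' : edist p u + idist N.locus u u' + edist u' q = idist N.locus p q ∨
      edist p v + idist N.locus v u' + edist u' q = idist N.locus p q := by
    rcases N.gate_min he hp (hno' u' (left_mem_segment ℝ u' v')) with h | h
    · left
      refine le_antisymm ?_ hlb1
      calc edist p u + idist N.locus u u' + edist u' q
          = edist q u' + (idist N.locus u' u + edist u p) := by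
            rw [show idist N.locus u u' = idist N.locus u' u from idist_comm,
              edist_comm p u, edist_comm u' q]
            ring
        _ ≤ edist q u' + idist N.locus u' p := add_le_add_right h _
        _ = idist N.locus p q := eq3.symm
    · right
      refine le_antisymm ?_ hlb3
      calc edist p v + idist N.locus v u' + edist u' q
          = edist q u' + (idist N.locus u' v + edist v p) := by
            rw [show idist N.locus v u' = idist N.locus u' v from idist_comm,
              edist_comm p v, edist_comm u' q]
            ring
        _ ≤ edist q u' + idist N.locus u' p := add_le_add_right h _
        _ = idist N.locus p q := eq3.symm
  have col_v' : edist p u + idist N.locus u v' + edist v' q = idist N.locus p q ∨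
      edist p v + idist N.locus v v' + edist v' q = idist N.locus p q := by
    rcases N.gate_min he hp (hno' v' (right_mem_segment ℝ u' v')) with h | h
    · left
      refine le_antisymm ?_ hlb2
      calc edist p u + idist N.locus u v' + edist v' q
          = edist q v' + (idist N.locus v' u + edist u p) := by
            rw [show idist N.locus u v' = idist N.locus v' u from idist_comm,
              edist_comm p u, edist_comm v' q]
            ring
        _ ≤ edist q v' + idist N.locus v' p := add_le_add_right h _
        _ = idist N.locus p q := eq4.symm
    · right
      refine le_antisymm ?_ hlb4
      calc edist p v + idist N.locus v v' + edist v' q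
          = edist q v' + (idist N.locus v' v + edist v p) := by
            rw [show idist N.locus v v' = idist N.locus v' v from idist_comm,
              edist_comm p v, edist_comm v' q]
            ring
        _ ≤ edist q v' + idist N.locus v' p := add_le_add_right h _
        _ = idist N.locus p q := eq4.symm
  have final : (edist p u + idist N.locus u u' + edist u' q = idist N.locus p q ∧
      edist p v + idist N.locus v v' + edist v' q = idist N.locus p q) ∨
      (edist p u + idist N.locus u v' + edist v' q = idist N.locus p q ∧
      edist p v + idist N.locus v u' + edist u' q = idist N.locus p q) := by
    tauto
  rcases final with ⟨h1, h2⟩ | ⟨h1, h2⟩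
  · exact Or.inl ⟨h1.symm, h2.symm⟩
  · exact Or.inr ⟨h1.symm, h2.symm⟩
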